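/- For every real number s > 2 and every integer r ≥ 1, | ∑_{p=⌊√r⌋+1}^{2r} p^{2−s}(1 − s·ln p)/(2p−2r−1) | ≤ 2 r^{1−s/2} (1 + s·ln(2r)) (1 + ln(2r)); in particular, for each fixed s > 2 this sum tends to 0 as the integer r tends to infinity. -/

import Mathlib

open Filter Finset

lemma denomSum (r : ℕ) (hr : 1 ≤ r) :
    ∑ p ∈ Finset.Icc 1 (2 * r), (1 : ℝ) / |2 * (p : ℝ) - 2 * (r : ℝ) - 1| ≤
      2 * (1 + Real.log (2 * (r : ℝ))) := by
  have hIcc : Finset.Icc 1 (2 * r) = Finset.Ioc 0 (2 * r) := by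
    rw [← Finset.Icc_add_one_left_eq_Ioc]; rfl
  have hsplit :
      ∑ p ∈ Finset.Ioc 0 r, (1 : ℝ) / |2 * (p : ℝ) - 2 * (r : ℝ) - 1| +
        ∑ p ∈ Finset.Ioc r (2 * r), (1 : ℝ) / |2 * (p : ℝ) - 2 * (r : ℝ) - 1| =
      ∑ p ∈ Finset.Ioc 0 (2 * r), (1 : ℝ) / |2 * (p : ℝ) - 2 * (r : ℝ) - 1| :=
    Finset.sum_Ioc_consecutive _ (Nat.zero_le r) (by omega)
  -- harmonic bound
  have hharm : ∑ j ∈ Finset.range r, (1 : ℝ) / (2 * (j : ℝ) + 1) ≤ 1 + Real.log (2 * (r : ℝ)) := by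
    have h1 : ∑ j ∈ Finset.range r, (1 : ℝ) / (2 * (j : ℝ) + 1) ≤
        ∑ j ∈ Finset.range r, (1 : ℝ) / ((j : ℝ) + 1) := by
      refine Finset.sum_le_sum fun j _ => ?_
      apply one_div_le_one_div_of_le <;> [positivity; nlinarith [Nat.cast_nonneg (α := ℝ) j]]
    have h2 : ∑ j ∈ Finset.range r, (1 : ℝ) / ((j : ℝ) + 1) = (harmonic r : ℝ) := by
      rw [harmonic]; push_cast; simp [one_div]
    have h3 : (harmonic r : ℝ) ≤ 1 + Real.log r := harmonic_le_one_add_log r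
    have h4 : Real.log (r : ℝ) ≤ Real.log (2 * (r : ℝ)) := by
      apply Real.log_le_log (by exact_mod_cast hr)
      have : (1:ℝ) ≤ r := by exact_mod_cast hr
      linarith
    linarith
  -- second piece
  have hpiece2 : ∑ p ∈ Finset.Ioc r (2 * r), (1 : ℝ) / |2 * (p : ℝ) - 2 * (r : ℝ) - 1| =
      ∑ j ∈ Finset.range r, (1 : ℝ) / (2 * (j : ℝ) + 1) := by
    have : Finset.Ioc r (2 * r) = Finset.Ico (r + 1) (2 * r + 1) := by
      rw [← Finset.Icc_add_one_left_eq_Ioc, Finset.Ico_add_one_right_eq_Icc]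
    rw [this, Finset.sum_Ico_eq_sum_range]
    have hn : 2 * r + 1 - (r + 1) = r := by omega
    rw [hn]
    refine Finset.sum_congr rfl fun j _ => ?_
    have h : 2 * ((↑(r + 1 + j) : ℝ)) - 2 * (r : ℝ) - 1 = 2 * (j : ℝ) + 1 := by push_cast; ring
    rw [h, abs_of_pos (by positivity)]
  -- first piece
  have hpiece1 : ∑ p ∈ Finset.Ioc 0 r, (1 : ℝ) / |2 * (p : ℝ) - 2 * (r : ℝ) - 1| =
      ∑ j ∈ Finset.range r, (1 : ℝ) / (2 * (j : ℝ) + 1) := by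
    have : Finset.Ioc 0 r = Finset.Ico 1 (r + 1) := by
      rw [← Finset.Icc_add_one_left_eq_Ioc, Finset.Ico_add_one_right_eq_Icc]; rfl
    rw [this, Finset.sum_Ico_eq_sum_range]
    have hn : r + 1 - 1 = r := by omega
    rw [hn, ← Finset.sum_range_reflect (fun j => (1 : ℝ) / (2 * (j : ℝ) + 1)) r]
    refine Finset.sum_congr rfl fun j hj => ?_
    have hjr : j < r := Finset.mem_range.mp hj
    have h : 2 * ((↑(1 + j) : ℝ)) - 2 * (r : ℝ) - 1 = -(2 * (↑(r - 1 - j) : ℝ) + 1) := by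
      have : ((r - 1 - j : ℕ) : ℝ) = (r : ℝ) - 1 - (j : ℝ) := by
        have : j ≤ r - 1 := by omega
        push_cast [Nat.sub_sub, Nat.cast_sub (by omega : 1 + j ≤ r)]
        ring
      rw [this]; push_cast; ring
    rw [h, abs_neg, abs_of_pos (by positivity)]
  rw [hIcc, ← hsplit, hpiece1, hpiece2]
  linarith

theorem stmt8 (s : ℝ) (hs : 2 < s) :
    (∀ r : ℕ, 1 ≤ r →
      |∑ p ∈ Finset.Icc (Nat.sqrt r + 1) (2 * r),
          (p : ℝ) ^ (2 - s) * (1 - s * Real.log (p : ℝ)) /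
            (2 * (p : ℝ) - 2 * (r : ℝ) - 1)| ≤
        2 * (r : ℝ) ^ (1 - s / 2) * (1 + s * Real.log (2 * (r : ℝ))) *
          (1 + Real.log (2 * (r : ℝ)))) ∧
      Filter.Tendsto
        (fun r : ℕ =>
          ∑ p ∈ Finset.Icc (Nat.sqrt r + 1) (2 * r),
            (p : ℝ) ^ (2 - s) * (1 - s * Real.log (p : ℝ)) /
              (2 * (p : ℝ) - 2 * (r : ℝ) - 1))
        Filter.atTop (nhds 0) := by
  have hbound : ∀ r : ℕ, 1 ≤ r →
      |∑ p ∈ Finset.Icc (Nat.sqrt r + 1) (2 * r),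
          (p : ℝ) ^ (2 - s) * (1 - s * Real.log (p : ℝ)) /
            (2 * (p : ℝ) - 2 * (r : ℝ) - 1)| ≤
        2 * (r : ℝ) ^ (1 - s / 2) * (1 + s * Real.log (2 * (r : ℝ))) *
          (1 + Real.log (2 * (r : ℝ))) := by
    intro r hr
    have hR : (1 : ℝ) ≤ (r : ℝ) := by exact_mod_cast hr
    set C : ℝ := (r : ℝ) ^ (1 - s / 2) * (1 + s * Real.log (2 * (r : ℝ))) with hCdef
    have hlog2R : 0 ≤ Real.log (2 * (r : ℝ)) :=
      Real.log_nonneg (by linarith)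
    have hC : 0 ≤ C := by
      have h1 : (0:ℝ) ≤ (r : ℝ) ^ (1 - s / 2) := Real.rpow_nonneg (by linarith) _
      have hs0 : (0:ℝ) < s := by linarith
      exact mul_nonneg h1 (by nlinarith)
    have hterm : ∀ p ∈ Finset.Icc (Nat.sqrt r + 1) (2 * r),
        |(p : ℝ) ^ (2 - s) * (1 - s * Real.log (p : ℝ)) / (2 * (p : ℝ) - 2 * (r : ℝ) - 1)| ≤
          C * (1 / |2 * (p : ℝ) - 2 * (r : ℝ) - 1|) := by
      intro p hp
      obtain ⟨hp1, hp2⟩ := Finset.mem_Icc.mp hp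
      have hp1' : (1:ℕ) ≤ p := le_trans (by omega) hp1
      have hpR : (1:ℝ) ≤ (p:ℝ) := by exact_mod_cast hp1'
      -- |denominator| ≥ 1
      have hD : (1:ℝ) ≤ |2 * (p : ℝ) - 2 * (r : ℝ) - 1| := by
        rcases le_or_gt p r with h | h
        · have : (p:ℝ) ≤ (r:ℝ) := by exact_mod_cast h
          exact le_abs.mpr (Or.inr (by linarith))
        · have : (r:ℝ) + 1 ≤ (p:ℝ) := by exact_mod_cast h
          exact le_abs.mpr (Or.inl (by linarith))
      have hD0 : (0:ℝ) < |2 * (p : ℝ) - 2 * (r : ℝ) - 1| := lt_of_lt_of_le one_pos hD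
      -- rpow bound
      have ha : (p : ℝ) ^ (2 - s) ≤ (r : ℝ) ^ (1 - s / 2) := by
        have hnat : r < p * p := by nlinarith [Nat.lt_succ_sqrt' r, hp1]
        have hrp : (r : ℝ) ≤ (p : ℝ) * (p : ℝ) := by exact_mod_cast hnat.le
        have h1 : (p : ℝ) ^ (2 - s) = ((p : ℝ) * (p : ℝ)) ^ ((2 - s) / 2) := by
          have hpp : (p : ℝ) * (p : ℝ) = (p : ℝ) ^ (2 : ℝ) := by
            rw [show (2:ℝ) = ((2:ℕ):ℝ) by norm_num, Real.rpow_natCast]; ring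
          rw [hpp, ← Real.rpow_mul (by linarith)]
          congr 1; ring
        have h2 : ((p : ℝ) * (p : ℝ)) ^ ((2 - s) / 2) ≤ (r : ℝ) ^ ((2 - s) / 2) :=
          Real.rpow_le_rpow_of_nonpos (by linarith) hrp (by linarith)
        have h3 : (r : ℝ) ^ ((2 - s) / 2) = (r : ℝ) ^ (1 - s / 2) := by
          congr 1; ring
        rw [h1, ← h3]; exact h2
      -- log factor bound
      have hb : |1 - s * Real.log (p : ℝ)| ≤ 1 + s * Real.log (2 * (r : ℝ)) := by
        have hlp : 0 ≤ Real.log (p : ℝ) := Real.log_nonneg hpR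
        have hlp2 : Real.log (p : ℝ) ≤ Real.log (2 * (r : ℝ)) := by
          apply Real.log_le_log (by linarith)
          have : (p : ℝ) ≤ ((2 * r : ℕ) : ℝ) := by exact_mod_cast hp2
          push_cast at this; linarith
        have hs0 : (0:ℝ) < s := by linarith
        refine abs_le.mpr ⟨by nlinarith, by nlinarith⟩
      have hnum : (p : ℝ) ^ (2 - s) * |1 - s * Real.log (p : ℝ)| ≤ C := by
        exact mul_le_mul ha hb (abs_nonneg _) (Real.rpow_nonneg (by linarith) _)
      calc |(p : ℝ) ^ (2 - s) * (1 - s * Real.log (p : ℝ)) /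
              (2 * (p : ℝ) - 2 * (r : ℝ) - 1)|
          = (p : ℝ) ^ (2 - s) * |1 - s * Real.log (p : ℝ)| /
              |2 * (p : ℝ) - 2 * (r : ℝ) - 1| := by
            rw [abs_div, abs_mul, abs_of_nonneg (Real.rpow_nonneg (by linarith : (0:ℝ) ≤ p) _)]
        _ ≤ C / |2 * (p : ℝ) - 2 * (r : ℝ) - 1| := by gcongr
        _ = C * (1 / |2 * (p : ℝ) - 2 * (r : ℝ) - 1|) := by ring
    calc |∑ p ∈ Finset.Icc (Nat.sqrt r + 1) (2 * r),
            (p : ℝ) ^ (2 - s) * (1 - s * Real.log (p : ℝ)) /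
              (2 * (p : ℝ) - 2 * (r : ℝ) - 1)|
        ≤ ∑ p ∈ Finset.Icc (Nat.sqrt r + 1) (2 * r),
            |(p : ℝ) ^ (2 - s) * (1 - s * Real.log (p : ℝ)) /
              (2 * (p : ℝ) - 2 * (r : ℝ) - 1)| := Finset.abs_sum_le_sum_abs _ _
      _ ≤ ∑ p ∈ Finset.Icc (Nat.sqrt r + 1) (2 * r),
            C * (1 / |2 * (p : ℝ) - 2 * (r : ℝ) - 1|) := Finset.sum_le_sum hterm
      _ ≤ ∑ p ∈ Finset.Icc 1 (2 * r),
            C * (1 / |2 * (p : ℝ) - 2 * (r : ℝ) - 1|) := by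
          apply Finset.sum_le_sum_of_subset_of_nonneg
          · exact Finset.Icc_subset_Icc_left (by omega)
          · intro p _ _
            positivity
      _ = C * ∑ p ∈ Finset.Icc 1 (2 * r), (1 : ℝ) / |2 * (p : ℝ) - 2 * (r : ℝ) - 1| := by
          rw [Finset.mul_sum]
      _ ≤ C * (2 * (1 + Real.log (2 * (r : ℝ)))) :=
          mul_le_mul_of_nonneg_left (denomSum r hr) hC
      _ = 2 * (r : ℝ) ^ (1 - s / 2) * (1 + s * Real.log (2 * (r : ℝ))) *
            (1 + Real.log (2 * (r : ℝ))) := by rw [hCdef]; ring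
  refine ⟨hbound, ?_⟩
  -- the bound tends to 0
  set a : ℝ := (1 - s / 2) / 2 with hadef
  have ha : a < 0 := by rw [hadef]; linarith
  have hxa : Tendsto (fun x : ℝ => x ^ a) atTop (nhds 0) := by
    simpa using tendsto_rpow_neg_atTop (show (0:ℝ) < -a by linarith)
  have hlog : Tendsto (fun x : ℝ => x ^ a * Real.log x) atTop (nhds 0) := by
    have h := (isLittleO_log_rpow_atTop (show (0:ℝ) < -a by linarith)).tendsto_div_nhds_zero
    apply h.congr'
    filter_upwards [eventually_gt_atTop (0:ℝ)] with x hx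
    rw [Real.rpow_neg hx.le]; field_simp
  have hA : ∀ t : ℝ, Tendsto (fun x : ℝ => x ^ a * (1 + t * Real.log (2 * x))) atTop (nhds 0) := by
    intro t
    have h : Tendsto (fun x : ℝ => x ^ a * (1 + t * Real.log 2) + t * (x ^ a * Real.log x))
        atTop (nhds 0) := by
      have := (hxa.mul_const (1 + t * Real.log 2)).add (hlog.const_mul t)
      simpa using this
    apply h.congr'
    filter_upwards [eventually_gt_atTop (0:ℝ)] with x hx
    rw [Real.log_mul (by norm_num) hx.ne']
    ring
  have hF : Tendsto (fun x : ℝ =>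
      2 * x ^ (1 - s / 2) * (1 + s * Real.log (2 * x)) * (1 + Real.log (2 * x)))
      atTop (nhds 0) := by
    have h : Tendsto (fun x : ℝ =>
        2 * ((x ^ a * (1 + s * Real.log (2 * x))) * (x ^ a * (1 + 1 * Real.log (2 * x)))))
        atTop (nhds 0) := by
      have := ((hA s).mul (hA 1)).const_mul 2
      simpa using this
    apply h.congr'
    filter_upwards [eventually_gt_atTop (0:ℝ)] with x hx
    have : x ^ (1 - s / 2) = x ^ a * x ^ a := by
      rw [← Real.rpow_add hx, hadef]; ring_nf
    rw [this]; ring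
  have hFn : Tendsto (fun r : ℕ =>
      2 * (r : ℝ) ^ (1 - s / 2) * (1 + s * Real.log (2 * (r : ℝ))) *
        (1 + Real.log (2 * (r : ℝ)))) atTop (nhds 0) :=
    hF.comp tendsto_natCast_atTop_atTop
  apply squeeze_zero_norm' _ hFn
  filter_upwards [eventually_ge_atTop 1] with r hr
  simpa [Real.norm_eq_abs] using hbound r hr
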